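/- For all reals α > 1 and c > 1, if γ is a real number with 1 < γ < 1 + (c−1)/α and D(1/α ‖ (γ−1)/(c−1)) = ln(c)/α, then γ < 2 − 1/c < 2. -/

import Mathlib

/-- Kullback–Leibler divergence `D(a‖b) = a·ln(a/b) + (1−a)·ln((1−a)/(1−b))`.
(The convention `0·ln 0 = 0` holds automatically since `Real.log 0 = 0`.) -/
noncomputable def klDiv (a b : ℝ) : ℝ :=
  a * Real.log (a / b) + (1 - a) * Real.log ((1 - a) / (1 - b))

/-- For all reals `α > 1` and `c > 1`, if `γ` satisfies `1 < γ < 1 + (c−1)/α` and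
`D(1/α ‖ (γ−1)/(c−1)) = ln(c)/α`, then `γ < 2 − 1/c < 2`. -/
theorem stmt2 (α c γ : ℝ) (hα : 1 < α) (hc : 1 < c)
    (h1 : 1 < γ) (h2 : γ < 1 + (c - 1) / α)
    (h3 : klDiv (1 / α) ((γ - 1) / (c - 1)) = Real.log c / α) :
    γ < 2 - 1 / c ∧ 2 - 1 / c < 2 := by
  have hc0 : (0:ℝ) < c := by linarith
  have hα0 : (0:ℝ) < α := by linarith
  have hc1 : (0:ℝ) < c - 1 := by linarith
  constructor
  · by_contra hγ
    push_neg at hγ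
    set a : ℝ := 1 / α with ha_def
    set b : ℝ := (γ - 1) / (c - 1) with hb_def
    have ha0 : 0 < a := by positivity
    have ha1 : a < 1 := by
      rw [ha_def, div_lt_one hα0]; linarith
    have hb0 : 0 < b := by
      apply div_pos <;> linarith
    have hba : b < a := by
      have h4 : (γ - 1) * α < c - 1 := by
        have := (lt_div_iff₀ hα0).mp (show γ - 1 < (c - 1) / α by linarith)
        linarith
      rw [hb_def, ha_def, div_lt_div_iff₀ hc1 hα0]
      linarith
    have hbc : 1 ≤ b * c := by
      have hic : 1 / c * c = 1 := by field_simp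
      have h5 : c - 1 ≤ (γ - 1) * c := by
        nlinarith [mul_le_mul_of_nonneg_right hγ hc0.le]
      rw [hb_def, div_mul_eq_mul_div, le_div_iff₀ hc1]
      linarith
    have habc0 : 0 < a / (b * c) := by positivity
    have hsplit : Real.log (a / b) = Real.log (a / (b * c)) + Real.log c := by
      rw [← Real.log_mul (ne_of_gt habc0) (ne_of_gt hc0)]
      congr 1
      field_simp
    have h1b : 0 < 1 - b := by linarith
    have h1a : 0 < 1 - a := by linarith
    have hkey1 : Real.log (a / (b * c)) ≤ Real.log a := by
      apply Real.log_le_log habc0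
      calc a / (b * c) ≤ a / 1 := by
            apply div_le_div_of_nonneg_left (le_of_lt ha0) one_pos hbc
        _ = a := div_one a
    have hloga : Real.log a < 0 := Real.log_neg ha0 ha1
    have hkey2 : Real.log ((1 - a) / (1 - b)) < 0 := by
      apply Real.log_neg (div_pos h1a h1b)
      rw [div_lt_one h1b]; linarith
    have heq : a * Real.log (a / b) + (1 - a) * Real.log ((1 - a) / (1 - b))
        = a * Real.log c := by
      have h6 := h3
      simp only [klDiv] at h6
      rw [h6, ha_def]; ring
    have t1 : a * Real.log (a / (b * c)) ≤ a * Real.log a :=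
      mul_le_mul_of_nonneg_left hkey1 (le_of_lt ha0)
    have t2 : (1 - a) * Real.log ((1 - a) / (1 - b)) < 0 :=
      mul_neg_of_pos_of_neg h1a hkey2
    have t3 : a * Real.log a < 0 := mul_neg_of_pos_of_neg ha0 hloga
    rw [hsplit] at heq
    nlinarith
  · have : 0 < 1 / c := by positivity
    linarith
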